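/- Let (A, B, C) be a recollement of abelian categories. If i^* is exact, then for every object X of B the counit υ_X : j_!(j^*(X)) → X of the adjunction j_! ⊣ j^* and the unit ν_X : X → i_*(i^*(X)) of the adjunction i^* ⊣ i_* form a short exact sequence 0 → j_!(j^*(X)) → X → i_*(i^*(X)) → 0 in B. -/
import Mathlib


open CategoryTheory CategoryTheory.Limits CategoryTheory.Abelian ZeroObject

universe v u

namespace PaperRecollement

/-- The `k`-th Ext group of two objects in an abelian category,
as a type (it carries an `AddCommGroup` structure). -/
noncomputable def ExtGrp {D : Type u} [Category.{v} D] [Abelian D] (X Y : D) (k : ℕ) :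
    Type (max u v) :=
  letI : HasDerivedCategory.{max u v} D := HasDerivedCategory.standard D
  letI : HasExt.{max u v} D := hasExt_of_hasDerivedCategory D
  Abelian.Ext X Y k

noncomputable instance {D : Type u} [Category.{v} D] [Abelian D] (X Y : D) (k : ℕ) :
    AddCommGroup (ExtGrp X Y k) :=
  letI : HasDerivedCategory.{max u v} D := HasDerivedCategory.standard D
  letI : HasExt.{max u v} D := hasExt_of_hasDerivedCategory D
  inferInstanceAs (AddCommGroup (Abelian.Ext X Y k))

/-- `Ext^k(X, Y) = 0`. -/
def ExtVanish {D : Type u} [Category.{v} D] [Abelian D] (X Y : D) (k : ℕ) : Prop :=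
  Subsingleton (ExtGrp X Y k)

/-- A functor between abelian categories is exact if it is additive and preserves
short exact sequences. -/
structure IsExactFunctor {A : Type u} {B : Type u} [Category.{v} A] [Category.{v} B]
    [Abelian A] [Abelian B] (F : A ⥤ B) : Prop where
  additive : F.Additive
  preserves_shortExact : ∀ ⦃X Y Z : A⦄ (f : X ⟶ Y) (g : Y ⟶ Z) (w : f ≫ g = 0)
    (w' : F.map f ≫ F.map g = 0),
    (ShortComplex.mk f g w).ShortExact → (ShortComplex.mk (F.map f) (F.map g) w').ShortExact

/-- A recollement of abelian categories. -/
structure Recollement (A B C : Type u) [Category.{v} A] [Category.{v} B] [Category.{v} C]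
    [Abelian A] [Abelian B] [Abelian C] where
  /-- `i_* : A ⥤ B` -/
  iStar : A ⥤ B
  /-- `i^* : B ⥤ A` -/
  iUStar : B ⥤ A
  /-- `i^! : B ⥤ A` -/
  iShriek : B ⥤ A
  /-- `j^* : B ⥤ C` -/
  jUStar : B ⥤ C
  /-- `j_! : C ⥤ B` -/
  jShriek : C ⥤ B
  /-- `j_* : C ⥤ B` -/
  jStar : C ⥤ B
  adj₁ : iUStar ⊣ iStar
  adj₂ : iStar ⊣ iShriek
  adj₃ : jShriek ⊣ jUStar
  adj₄ : jUStar ⊣ jStar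
  iUStar_additive : iUStar.Additive
  iShriek_additive : iShriek.Additive
  jShriek_additive : jShriek.Additive
  jStar_additive : jStar.Additive
  iStar_full : iStar.Full
  iStar_faithful : iStar.Faithful
  jShriek_full : jShriek.Full
  jShriek_faithful : jShriek.Faithful
  jStar_full : jStar.Full
  jStar_faithful : jStar.Faithful
  iStar_exact : IsExactFunctor iStar
  jUStar_exact : IsExactFunctor jUStar
  essIm_iStar_eq_ker_jUStar : ∀ X : B,
    (∃ Y : A, Nonempty (iStar.obj Y ≅ X)) ↔ Nonempty (jUStar.obj X ≅ 0)

variable {D : Type u} [Category.{v} D] [Abelian D]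

/-- `Z^∧_m` : objects with a `Z`-resolution of length `m`. -/
def ResClass (Z : Set D) : ℕ → Set D
  | 0 => {C | ∃ Z₀ ∈ Z, Nonempty (Z₀ ≅ C)}
  | (m + 1) => {C | ∃ (K X : D) (f : K ⟶ X) (g : X ⟶ C) (w : f ≫ g = 0),
      (ShortComplex.mk f g w).ShortExact ∧ X ∈ Z ∧ K ∈ ResClass Z m}

/-- `Z^∨_m` : objects with a `Z`-coresolution of length `m`. -/
def CoresClass (Z : Set D) : ℕ → Set D
  | 0 => {C | ∃ Z₀ ∈ Z, Nonempty (C ≅ Z₀)}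
  | (m + 1) => {C | ∃ (X K : D) (f : C ⟶ X) (g : X ⟶ K) (w : f ≫ g = 0),
      (ShortComplex.mk f g w).ShortExact ∧ X ∈ Z ∧ K ∈ CoresClass Z m}

/-- Left `n`-cotorsion pair. -/
structure IsLeftNCotorsionPair (n : ℕ) (𝒳 𝒴 : Set D) : Prop where
  closed_summands : ∀ ⦃X X' : D⦄, X ∈ 𝒳 →
    (∃ (s : X' ⟶ X) (r : X ⟶ X'), s ≫ r = 𝟙 X') → X' ∈ 𝒳
  ext_vanish : ∀ ⦃X Y : D⦄, X ∈ 𝒳 → Y ∈ 𝒴 → ∀ k, 1 ≤ k → k ≤ n → ExtVanish X Y k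
  exists_ses : ∀ C : D, ∃ (K X : D) (f : K ⟶ X) (g : X ⟶ C) (w : f ≫ g = 0),
    (ShortComplex.mk f g w).ShortExact ∧ X ∈ 𝒳 ∧ K ∈ ResClass 𝒴 (n - 1)

/-- Right `n`-cotorsion pair. -/
structure IsRightNCotorsionPair (n : ℕ) (𝒳 𝒴 : Set D) : Prop where
  closed_summands : ∀ ⦃Y Y' : D⦄, Y ∈ 𝒴 →
    (∃ (s : Y' ⟶ Y) (r : Y ⟶ Y'), s ≫ r = 𝟙 Y') → Y' ∈ 𝒴
  ext_vanish : ∀ ⦃X Y : D⦄, X ∈ 𝒳 → Y ∈ 𝒴 → ∀ k, 1 ≤ k → k ≤ n → ExtVanish X Y k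
  exists_ses : ∀ C : D, ∃ (Y Z : D) (f : C ⟶ Y) (g : Y ⟶ Z) (w : f ≫ g = 0),
    (ShortComplex.mk f g w).ShortExact ∧ Y ∈ 𝒴 ∧ Z ∈ CoresClass 𝒳 (n - 1)

/-- `n`-cotorsion pair. -/
def IsNCotorsionPair (n : ℕ) (𝒳 𝒴 : Set D) : Prop :=
  IsLeftNCotorsionPair n 𝒳 𝒴 ∧ IsRightNCotorsionPair n 𝒳 𝒴

/-- Hereditary `n`-cotorsion pair. -/
def IsHereditaryNCotorsionPair (n : ℕ) (𝒳 𝒴 : Set D) : Prop :=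
  IsNCotorsionPair n 𝒳 𝒴 ∧ ∀ ⦃X Y : D⦄, X ∈ 𝒳 → Y ∈ 𝒴 → ExtVanish X Y (n + 1)

/-- The image class of a class of objects under a functor: objects isomorphic to
`F.obj X` for some `X ∈ S`. -/
def imgClass {A B : Type u} [Category.{v} A] [Category.{v} B] (F : A ⥤ B) (S : Set A) :
    Set B :=
  {Y | ∃ X ∈ S, Nonempty (F.obj X ≅ Y)}

/-- A pseudo cluster tilting subcategory of an abelian category, given as a class of
objects: a full additive iso-closed subcategory admitting the two approximation
short exact sequences. -/
structure IsPseudoClusterTilting (T : Set D) : Prop where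
  iso_closed : ∀ ⦃X Y : D⦄, X ∈ T → Nonempty (X ≅ Y) → Y ∈ T
  zero_mem : (0 : D) ∈ T
  biprod_mem : ∀ ⦃X Y : D⦄, X ∈ T → Y ∈ T → (X ⊞ Y) ∈ T
  left_approx : ∀ C : D, ∃ (T₁ T₂ : D) (f : C ⟶ T₁) (g : T₁ ⟶ T₂) (w : f ≫ g = 0),
    (ShortComplex.mk f g w).ShortExact ∧ T₁ ∈ T ∧ T₂ ∈ T ∧
      ∀ T' ∈ T, ∀ h : C ⟶ T', ∃ k : T₁ ⟶ T', f ≫ k = h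
  right_approx : ∀ C : D, ∃ (T₃ T₄ : D) (f : T₃ ⟶ T₄) (g : T₄ ⟶ C) (w : f ≫ g = 0),
    (ShortComplex.mk f g w).ShortExact ∧ T₃ ∈ T ∧ T₄ ∈ T ∧
      ∀ T' ∈ T, ∀ h : T' ⟶ C, ∃ k : T' ⟶ T₄, k ≫ g = h


variable {A B C : Type u} [Category.{v} A] [Category.{v} B] [Category.{v} C]
  [Abelian A] [Abelian B] [Abelian C]


section Aux

namespace Recollement

variable {A B C : Type u} [Category.{v} A] [Category.{v} B] [Category.{v} C]
  [Abelian A] [Abelian B] [Abelian C]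

/-- Mapping a `≫ = 0` relation through an additive functor. -/
lemma _root_.PaperRecollement.IsExactFunctor.map_w
    {A B : Type u} [Category.{v} A] [Category.{v} B] [Abelian A] [Abelian B]
    {F : A ⥤ B} (hF : IsExactFunctor F) {X Y Z : A} {f : X ⟶ Y} {g : Y ⟶ Z}
    (w : f ≫ g = 0) : F.map f ≫ F.map g = 0 := by
  haveI := hF.additive
  rw [← F.map_comp, w, Functor.map_zero]

/-- Mapping a short exact sequence through an exact functor. -/
lemma _root_.PaperRecollement.IsExactFunctor.map_shortExact
    {A B : Type u} [Category.{v} A] [Category.{v} B] [Abelian A] [Abelian B]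
    {F : A ⥤ B} (hF : IsExactFunctor F) {X Y Z : A} {f : X ⟶ Y} {g : Y ⟶ Z}
    (w : f ≫ g = 0) (h : (ShortComplex.mk f g w).ShortExact) :
    (ShortComplex.mk (F.map f) (F.map g) (hF.map_w w)).ShortExact :=
  hF.preserves_shortExact f g w _ h

/-- A mono together with its cokernel forms a short exact sequence. -/
lemma _root_.PaperRecollement.shortExact_of_mono {D : Type u} [Category.{v} D] [Abelian D]
    {X Y : D} (f : X ⟶ Y) [Mono f] :
    (ShortComplex.mk f (cokernel.π f) (cokernel.condition f)).ShortExact where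
  exact := ShortComplex.exact_of_f_is_kernel _
    (Abelian.monoIsKernelOfCokernel (CokernelCofork.ofπ (cokernel.π f) (cokernel.condition f)) (cokernelIsCokernel f))

/-- An epi together with its kernel forms a short exact sequence. -/
lemma _root_.PaperRecollement.shortExact_of_epi {D : Type u} [Category.{v} D] [Abelian D]
    {X Y : D} (g : X ⟶ Y) [Epi g] :
    (ShortComplex.mk (kernel.ι g) g (kernel.condition g)).ShortExact where
  exact := ShortComplex.exact_of_f_is_kernel _ (kernelIsKernel g)

variable (R : Recollement A B C)

lemma isZero_jUStar_iStar (Y : A) : IsZero (R.jUStar.obj (R.iStar.obj Y)) := by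
  obtain ⟨e⟩ := (R.essIm_iStar_eq_ker_jUStar (R.iStar.obj Y)).mp ⟨Y, ⟨Iso.refl _⟩⟩
  exact (isZero_zero _).of_iso e

lemma hom_jShriek_iStar_eq_zero {c : C} {a : A} (f : R.jShriek.obj c ⟶ R.iStar.obj a) :
    f = 0 := by
  haveI := R.jShriek_additive
  have hz : (R.adj₃.homEquiv c (R.iStar.obj a)) f = 0 :=
    (R.isZero_jUStar_iStar a).eq_of_tgt _ _
  have h2 := (R.adj₃.homEquiv c (R.iStar.obj a)).symm_apply_apply f
  rw [hz, Adjunction.homEquiv_counit, Functor.map_zero, zero_comp] at h2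
  exact h2.symm

lemma isZero_iUStar_jShriek (c : C) : IsZero (R.iUStar.obj (R.jShriek.obj c)) := by
  haveI := R.iUStar_additive
  rw [IsZero.iff_id_eq_zero]
  have hz := (R.adj₁.homEquiv (R.jShriek.obj c)
    (R.iUStar.obj (R.jShriek.obj c))).symm_apply_apply (𝟙 _)
  rw [R.hom_jShriek_iStar_eq_zero ((R.adj₁.homEquiv _ _) (𝟙 _)),
    Adjunction.homEquiv_counit, Functor.map_zero, zero_comp] at hz
  exact hz.symm

lemma isZero_of_isZero (Z : B) (h1 : IsZero (R.iUStar.obj Z))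
    (h2 : IsZero (R.jUStar.obj Z)) : IsZero Z := by
  haveI := R.iStar_full
  haveI := R.iStar_faithful
  haveI := R.iStar_exact.additive
  obtain ⟨Y, ⟨e⟩⟩ := (R.essIm_iStar_eq_ker_jUStar Z).mpr ⟨h2.isoZero⟩
  haveI : IsIso (R.iStar.map (R.adj₁.counit.app Y)) :=
    isIso_of_hom_comp_eq_id _ (R.adj₁.right_triangle_components Y)
  haveI : IsIso (R.adj₁.counit.app Y) := isIso_of_reflects_iso _ R.iStar
  have hY : IsZero Y :=
    (h1.of_iso (R.iUStar.mapIso e)).of_iso (asIso (R.adj₁.counit.app Y)).symm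
  have hiY : IsZero (R.iStar.obj Y) := by
    rw [IsZero.iff_id_eq_zero, ← R.iStar.map_id, (IsZero.iff_id_eq_zero Y).mp hY,
      Functor.map_zero]
  exact hiY.of_iso e.symm

end Recollement

end Aux

/-- if `i^*` is exact, `0 → j_! j^* X → X → i_* i^* X → 0` is exact. -/
theorem counit_unit_shortExact_of_iUStar_exact
    (R : Recollement A B C) (hiU : IsExactFunctor R.iUStar) (X : B) :
    ∃ w : R.adj₃.counit.app X ≫ R.adj₁.unit.app X = 0,
      (ShortComplex.mk (R.adj₃.counit.app X) (R.adj₁.unit.app X) w).ShortExact := by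
  haveI := R.iStar_full
  haveI := R.iStar_faithful
  haveI := R.jShriek_full
  haveI := R.jShriek_faithful
  haveI := hiU.additive
  haveI := R.jUStar_exact.additive
  set υ := R.adj₃.counit.app X with hυdef
  set ν := R.adj₁.unit.app X with hνdef
  -- the composite vanishes
  have w : υ ≫ ν = 0 := R.hom_jShriek_iStar_eq_zero _
  refine ⟨w, ?_⟩
  -- `i^* ν` and `j^* υ` are isomorphisms
  haveI hiν : IsIso (R.iUStar.map ν) := inferInstance
  haveI hjυ : IsIso (R.jUStar.map υ) := inferInstance
  -- `υ` is a monomorphism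
  haveI : Mono υ := by
    apply Abelian.mono_of_kernel_ι_eq_zero
    have hker : IsZero (kernel υ) := by
      apply R.isZero_of_isZero
      · haveI := (hiU.map_shortExact _ (shortExact_of_mono (kernel.ι υ))).mono_f
        exact IsZero.of_mono_eq_zero (R.iUStar.map (kernel.ι υ))
          ((R.isZero_iUStar_jShriek _).eq_of_tgt _ _)
      · haveI := (R.jUStar_exact.map_shortExact _
          (shortExact_of_mono (kernel.ι υ))).mono_f
        refine IsZero.of_mono_eq_zero (R.jUStar.map (kernel.ι υ)) ?_
        have h0 : R.jUStar.map (kernel.ι υ) ≫ R.jUStar.map υ = 0 :=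
          R.jUStar_exact.map_w (kernel.condition υ)
        rwa [← cancel_mono (R.jUStar.map υ), zero_comp]
    exact hker.eq_of_src _ _
  -- `ν` is an epimorphism
  haveI : Epi ν := by
    apply Abelian.epi_of_cokernel_π_eq_zero
    set d := cokernel.π ν with hd
    set k := kernel.ι d with hk
    have hek : kernel.lift d ν (cokernel.condition ν) ≫ k = ν := kernel.lift_ι _ _ _
    have hSd := shortExact_of_epi d
    have hiSd := hiU.map_shortExact _ hSd
    have hjSd := R.jUStar_exact.map_shortExact _ hSd
    haveI := hiSd.mono_f
    haveI := hiSd.epi_g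
    haveI := hjSd.epi_g
    have hcoker : IsZero (cokernel ν) := by
      apply R.isZero_of_isZero
      · -- i^* side : `i^* k` is an isomorphism
        haveI : Epi (R.iUStar.map k) := by
          have : Epi (R.iUStar.map (kernel.lift d ν (cokernel.condition ν)) ≫
              R.iUStar.map k) := by
            rw [← R.iUStar.map_comp, hek]; infer_instance
          exact epi_of_epi (R.iUStar.map (kernel.lift d ν (cokernel.condition ν))) _
        have h0 : R.iUStar.map k ≫ R.iUStar.map d = 0 := hiU.map_w (kernel.condition d)
        have hd0 : R.iUStar.map d = 0 := by rwa [← cancel_epi (R.iUStar.map k), comp_zero]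
        exact IsZero.of_epi_eq_zero (R.iUStar.map d) hd0
      · -- j^* side : source of `j^* d` is zero
        exact IsZero.of_epi_eq_zero (R.jUStar.map d)
          ((R.isZero_jUStar_iStar _).eq_of_src _ _)
    exact hcoker.eq_of_tgt _ _
  -- the short exact sequence given by the kernel of `ν`
  have hS1 := shortExact_of_epi ν
  have hiS1 := hiU.map_shortExact _ hS1
  have hjS1 := R.jUStar_exact.map_shortExact _ hS1
  haveI := hiS1.mono_f
  haveI := hjS1.mono_f
  -- the comparison map `φ`
  set φ := kernel.lift ν υ w with hφdef
  have hφι : φ ≫ kernel.ι ν = υ := kernel.lift_ι _ _ _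
  haveI : Mono φ := mono_of_mono_fac hφι
  have hS2 := shortExact_of_mono φ
  have hiS2 := hiU.map_shortExact _ hS2
  have hjS2 := R.jUStar_exact.map_shortExact _ hS2
  haveI := hjS2.mono_f
  haveI := hiS2.epi_g
  haveI := hjS2.epi_g
  -- `i^* (kernel ν)` is zero
  have hik : IsZero (R.iUStar.obj (kernel ν)) := by
    refine IsZero.of_mono_eq_zero (R.iUStar.map (kernel.ι ν)) ?_
    have h0 : R.iUStar.map (kernel.ι ν) ≫ R.iUStar.map ν = 0 :=
      hiU.map_w (kernel.condition ν)
    rwa [← cancel_mono (R.iUStar.map ν), zero_comp]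
  -- `j^* φ` is an isomorphism
  have hjφcomp : R.jUStar.map φ ≫ R.jUStar.map (kernel.ι ν) = R.jUStar.map υ := by
    rw [← R.jUStar.map_comp, hφι]
  haveI : Epi (R.jUStar.map (kernel.ι ν)) := by
    have : Epi (R.jUStar.map φ ≫ R.jUStar.map (kernel.ι ν)) := by
      rw [hjφcomp]; infer_instance
    exact epi_of_epi (R.jUStar.map φ) _
  haveI : IsIso (R.jUStar.map (kernel.ι ν)) := isIso_of_mono_of_epi _
  haveI hjφ : IsIso (R.jUStar.map φ) := by
    have : R.jUStar.map φ = R.jUStar.map υ ≫ inv (R.jUStar.map (kernel.ι ν)) := by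
      rw [← hjφcomp]; simp
    rw [this]; infer_instance
  -- the cokernel of `φ` is zero, hence `φ` is epi
  haveI : Epi φ := by
    apply Abelian.epi_of_cokernel_π_eq_zero
    have hcoker : IsZero (cokernel φ) := by
      apply R.isZero_of_isZero
      · -- i^* side
        have hiφ0 : R.iUStar.map φ = 0 := (R.isZero_iUStar_jShriek _).eq_of_src _ _
        have h0 : R.iUStar.map φ ≫ R.iUStar.map (cokernel.π φ) = 0 :=
          hiU.map_w (cokernel.condition φ)
        refine IsZero.of_epi_eq_zero (R.iUStar.map (cokernel.π φ)) ?_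
        exact hik.eq_of_src _ _
      · -- j^* side
        have h0 : R.jUStar.map φ ≫ R.jUStar.map (cokernel.π φ) = 0 :=
          R.jUStar_exact.map_w (cokernel.condition φ)
        refine IsZero.of_epi_eq_zero (R.jUStar.map (cokernel.π φ)) ?_
        rwa [← cancel_epi (R.jUStar.map φ), comp_zero]
    exact hcoker.eq_of_tgt _ _
  haveI : IsIso φ := isIso_of_mono_of_epi _
  -- transport short exactness along the isomorphism of short complexes
  refine ShortComplex.shortExact_of_iso ?_ hS1
  exact ShortComplex.isoMk (asIso φ).symm (Iso.refl _) (Iso.refl _)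
    (by simp [hφι]) (by simp)
end PaperRecollement
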